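/- Let V be a finite-dimensional real vector space and let F ⊆ V be a subspace equipped with an antisymmetric bilinear form ω_F on F. Then L := {(X, α) ∈ V ⊕ V* : X ∈ F and α|_F = -ω_F(X,·)} is a maximal isotropic subspace of V ⊕ V*, of dimension dim V, whose projection to V is F. -/

import Mathlib

/-- From a pair `(F, ω_F)` with `F ⊆ V` and `ω_F` antisymmetric bilinear on `F`, the set
`L = {(X,α) : X ∈ F, α|_F = -ω_F(X,·)}` is a maximal isotropic subspace of `V ⊕ V*`
of dimension `dim V`, whose projection to `V` is `F`. -/
theorem stmt_11 (V : Type*) [AddCommGroup V] [Module ℝ V] [FiniteDimensional ℝ V]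
    (F : Submodule ℝ V) (ω : F →ₗ[ℝ] F →ₗ[ℝ] ℝ)
    (hanti : ∀ X Y : F, ω X Y = - ω Y X) :
    ∃ L : Submodule ℝ (V × Module.Dual ℝ V),
      (L : Set (V × Module.Dual ℝ V)) =
        {p | ∃ hX : p.1 ∈ F, ∀ Y : F, p.2 (Y : V) = - ω ⟨p.1, hX⟩ Y} ∧
      (∀ a ∈ L, ∀ b ∈ L, b.2 a.1 + a.2 b.1 = 0) ∧
      Module.finrank ℝ L = Module.finrank ℝ V ∧
      Submodule.map (LinearMap.fst ℝ V (Module.Dual ℝ V)) L = F := by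
  classical
  -- restriction map on duals and a linear section of it
  set r : Module.Dual ℝ V →ₗ[ℝ] Module.Dual ℝ F := F.subtype.dualMap with hr
  have hrsurj : Function.Surjective r :=
    LinearMap.dualMap_surjective_of_injective F.injective_subtype
  obtain ⟨s, hs⟩ := r.exists_rightInverse_of_surjective (LinearMap.range_eq_top.mpr hrsurj)
  have hs' : ∀ φ : Module.Dual ℝ F, r (s φ) = φ := fun φ =>
    congrFun (congrArg DFunLike.coe hs) φ
  -- the submodule L
  refine ⟨{ carrier := {p | ∃ hX : p.1 ∈ F, ∀ Y : F, p.2 (Y : V) = - ω ⟨p.1, hX⟩ Y}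
            add_mem' := ?_
            zero_mem' := ?_
            smul_mem' := ?_ }, rfl, ?_, ?_, ?_⟩
  · rintro ⟨x, α⟩ ⟨y, β⟩ ⟨hx, hα⟩ ⟨hy, hβ⟩
    refine ⟨F.add_mem hx hy, fun Y => ?_⟩
    have : (⟨x + y, F.add_mem hx hy⟩ : F) = ⟨x, hx⟩ + ⟨y, hy⟩ := rfl
    simp only [this, map_add, LinearMap.add_apply, Prod.fst_add, Prod.snd_add, hα Y, hβ Y]
    ring
  · refine ⟨F.zero_mem, fun Y => ?_⟩
    have : (⟨(0 : V), F.zero_mem⟩ : F) = 0 := rfl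
    simp [this]
  · rintro c ⟨x, α⟩ ⟨hx, hα⟩
    refine ⟨F.smul_mem c hx, fun Y => ?_⟩
    have : (⟨c • x, F.smul_mem c hx⟩ : F) = c • ⟨x, hx⟩ := rfl
    simp only [this, map_smul, LinearMap.smul_apply, Prod.smul_fst, Prod.smul_snd, hα Y,
      smul_eq_mul]
    ring
  · -- isotropy
    rintro ⟨x, α⟩ ⟨hx, hα⟩ ⟨y, β⟩ ⟨hy, hβ⟩
    have h1 : β x = - ω ⟨y, hy⟩ ⟨x, hx⟩ := hβ ⟨x, hx⟩
    have h2 : α y = - ω ⟨x, hx⟩ ⟨y, hy⟩ := hα ⟨y, hy⟩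
    simp only [h1, h2, hanti ⟨x, hx⟩ ⟨y, hy⟩]
    ring
  · -- dimension
    -- L is the range of an injective map from F × Dual (V ⧸ F)
    set f : F × Module.Dual ℝ (V ⧸ F) →ₗ[ℝ] V × Module.Dual ℝ V :=
      LinearMap.prod (F.subtype ∘ₗ LinearMap.fst ℝ _ _)
        (F.mkQ.dualMap ∘ₗ LinearMap.snd ℝ _ _ - s ∘ₗ ω ∘ₗ LinearMap.fst ℝ _ _) with hf
    have hfinj : Function.Injective f := by
      rw [← LinearMap.ker_eq_bot]
      ext ⟨X, γ⟩
      simp only [Submodule.mem_bot, LinearMap.mem_ker, hf, LinearMap.prod_apply, Function.prod,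
        LinearMap.comp_apply, LinearMap.fst_apply, LinearMap.snd_apply, LinearMap.sub_apply,
        Prod.mk_eq_zero, Prod.mk.injEq]
      constructor
      · rintro ⟨h1, h2⟩
        have hX : X = 0 := Subtype.ext h1
        subst hX
        simp only [map_zero, sub_zero] at h2
        have : γ = 0 :=
          LinearMap.dualMap_injective_of_surjective F.mkQ_surjective h2
        exact ⟨rfl, this⟩
      · rintro ⟨h1, h2⟩; subst h1; subst h2; simp
    have hrange : LinearMap.range f =
        { carrier := {p : V × Module.Dual ℝ V |
            ∃ hX : p.1 ∈ F, ∀ Y : F, p.2 (Y : V) = - ω ⟨p.1, hX⟩ Y}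
          add_mem' := by
            rintro ⟨x, α⟩ ⟨y, β⟩ ⟨hx, hα⟩ ⟨hy, hβ⟩
            refine ⟨F.add_mem hx hy, fun Y => ?_⟩
            have : (⟨x + y, F.add_mem hx hy⟩ : F) = ⟨x, hx⟩ + ⟨y, hy⟩ := rfl
            simp only [this, map_add, LinearMap.add_apply, Prod.fst_add, Prod.snd_add, hα Y, hβ Y]
            ring
          zero_mem' := by
            refine ⟨F.zero_mem, fun Y => ?_⟩
            have : (⟨(0 : V), F.zero_mem⟩ : F) = 0 := rfl
            simp [this]
          smul_mem' := by
            rintro c ⟨x, α⟩ ⟨hx, hα⟩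
            refine ⟨F.smul_mem c hx, fun Y => ?_⟩
            have : (⟨c • x, F.smul_mem c hx⟩ : F) = c • ⟨x, hx⟩ := rfl
            simp only [this, map_smul, LinearMap.smul_apply, Prod.smul_fst, Prod.smul_snd, hα Y,
              smul_eq_mul]
            ring } := by
      apply le_antisymm
      · rintro ⟨x, α⟩ ⟨⟨X, γ⟩, hXγ⟩
        simp only [hf, LinearMap.prod_apply, Function.prod, LinearMap.comp_apply, LinearMap.fst_apply,
          LinearMap.snd_apply, LinearMap.sub_apply, Prod.mk.injEq] at hXγ
        obtain ⟨h1, h2⟩ := hXγ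
        refine ⟨h1 ▸ X.2, fun Y => ?_⟩
        have hXeq : (⟨x, h1 ▸ X.2⟩ : F) = X := Subtype.ext h1.symm
        rw [← h2, hXeq]
        have hq : F.mkQ.dualMap γ (Y : V) = 0 := by
          simp [LinearMap.dualMap_apply, (Submodule.Quotient.mk_eq_zero F).mpr Y.2]
        have hres : (s (ω X)) (Y : V) = ω X Y := by
          have := hs' (ω X)
          exact congrFun (congrArg DFunLike.coe this) Y
        simp [hq, hres]
      · rintro ⟨x, α⟩ ⟨hx, hα⟩
        -- α + s (ω ⟨x,hx⟩) vanishes on F, hence comes from the quotient dual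
        have hvan : α + s (ω ⟨x, hx⟩) ∈ F.dualAnnihilator := by
          rw [Submodule.mem_dualAnnihilator]
          intro w hw
          have hres : (s (ω ⟨x, hx⟩)) w = ω ⟨x, hx⟩ ⟨w, hw⟩ := by
            have := hs' (ω ⟨x, hx⟩)
            exact congrFun (congrArg DFunLike.coe this) ⟨w, hw⟩
          simp [hα ⟨w, hw⟩, hres]
        rw [← F.range_dualMap_mkQ_eq] at hvan
        obtain ⟨γ, hγ⟩ := hvan
        refine ⟨⟨⟨x, hx⟩, γ⟩, ?_⟩
        simp only [hf, LinearMap.prod_apply, Function.prod, LinearMap.comp_apply, LinearMap.fst_apply,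
          LinearMap.snd_apply, LinearMap.sub_apply, Submodule.coe_subtype, Prod.mk.injEq]
        exact ⟨trivial, by rw [hγ]; abel⟩
    rw [← hrange]
    rw [LinearMap.finrank_range_of_inj hfinj, Module.finrank_prod, Subspace.dual_finrank_eq,
      add_comm, Submodule.finrank_quotient_add_finrank]
  · -- projection to V is F
    apply le_antisymm
    · rintro x ⟨⟨y, α⟩, ⟨hy, -⟩, rfl⟩
      exact hy
    · intro x hx
      refine ⟨⟨x, - s (ω ⟨x, hx⟩)⟩, ⟨hx, fun Y => ?_⟩, rfl⟩
      have hres : (s (ω ⟨x, hx⟩)) (Y : V) = ω ⟨x, hx⟩ Y := by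
        have := hs' (ω ⟨x, hx⟩)
        exact congrFun (congrArg DFunLike.coe this) Y
      simp [hres]
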